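/- For each NB-query Q there is a winning Prover strategy in the De Morgan game NB^DM from the initial state {Q^DM ↦ b, (¬Q)^DM ↦ b} with O(log s) rounds, where s is the number of maximal eNDT subformula occurrences in Q. -/

import Mathlib

/-- eNDT formulas. -/
inductive ENDT where
  | zero : ENDT
  | one : ENDT
  | dec : ENDT → ℕ → ENDT → ENDT
  | orf : ENDT → ENDT → ENDT
  | ext : ℕ → ENDT

/-- Strict upper bound on extension variable indices occurring in a formula. -/
def ENDT.extBound : ENDT → ℕ
  | .zero => 0
  | .one => 0
  | .dec A _ B => max A.extBound B.extBound
  | .orf A B => max A.extBound B.extBound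
  | .ext i => i + 1

/-- The propositional variable `p`, identified with the formula `0 p 1`. -/
def ENDT.pvar (p : ℕ) : ENDT := .dec .zero p .one

/-- The simulation judgement `A ≽_E B`. -/
inductive ENDT.Sim (E : ℕ → ENDT) : ENDT → ENDT → Prop
  | refl (A : ENDT) : ENDT.Sim E A A
  | dec {A B C D : ENDT} (p : ℕ) : ENDT.Sim E A C → ENDT.Sim E B D →
      ENDT.Sim E (.dec A p B) (.dec C p D)
  | orR {A C D : ENDT} : ENDT.Sim E A C → ENDT.Sim E A D → ENDT.Sim E A (.orf C D)
  | orL0 {A0 A1 B : ENDT} : ENDT.Sim E A0 B → ENDT.Sim E (.orf A0 A1) B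
  | orL1 {A0 A1 B : ENDT} : ENDT.Sim E A1 B → ENDT.Sim E (.orf A0 A1) B
  | extR {A : ENDT} (i : ℕ) : ENDT.Sim E A (E i) → ENDT.Sim E A (.ext i)
  | extL {B : ENDT} (i : ℕ) : ENDT.Sim E (E i) B → ENDT.Sim E (.ext i) B

/-- Queries of the game `NB`: Boolean combinations of eNDT formulas. -/
inductive BQuery where
  | base : ENDT → BQuery
  | not : BQuery → BQuery
  | or : BQuery → BQuery → BQuery
  | and : BQuery → BQuery → BQuery

/-- The simple contradictions of the game `NB` over extension axioms `E`. -/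
inductive NBContr (E : ℕ → ENDT) : Set (BQuery × Bool) → Prop
  | bool0 : NBContr E {(.base .zero, true)}
  | bool1 : NBContr E {(.base .one, false)}
  | decision (A0 A1 : ENDT) (p : ℕ) (i b0 b1 c : Bool) (h : c ≠ if i then b1 else b0) :
      NBContr E
        {(.base A0, b0), (.base A1, b1), (.base (ENDT.pvar p), i), (.base (.dec A0 p A1), c)}
  | notc (Q : BQuery) (b : Bool) : NBContr E {(.not Q, b), (Q, b)}
  | orc0 (Q0 Q1 : BQuery) : NBContr E {(.or Q0 Q1, false), (Q0, true)}
  | orc1 (Q0 Q1 : BQuery) : NBContr E {(.or Q0 Q1, false), (Q1, true)}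
  | orc2 (Q0 Q1 : BQuery) : NBContr E {(.or Q0 Q1, true), (Q0, false), (Q1, false)}
  | andc0 (Q0 Q1 : BQuery) : NBContr E {(.and Q0 Q1, true), (Q0, false)}
  | andc1 (Q0 Q1 : BQuery) : NBContr E {(.and Q0 Q1, true), (Q1, false)}
  | andc2 (Q0 Q1 : BQuery) : NBContr E {(.and Q0 Q1, false), (Q0, true), (Q1, true)}
  | extc (i : ℕ) (b : Bool) : NBContr E {(.base (.ext i), b), (.base (E i), !b)}
  | simc (A B : ENDT) (h : ENDT.Sim E A B) : NBContr E {(.base A, false), (.base B, true)}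

/-- Prover strategies: binary trees of queries. -/
inductive Strategy (Q : Type) where
  | leaf : Strategy Q
  | ask : Q → Strategy Q → Strategy Q → Strategy Q

/-- The depth (number of rounds) of a strategy. -/
def Strategy.depth {Q : Type} : Strategy Q → ℕ
  | .leaf => 0
  | .ask _ s0 s1 => max s0.depth s1.depth + 1

/-- `Wins IsContr Good σ S`: playing strategy `σ` from state `S`, every leaf state either
contains a simple contradiction (Prover wins) or satisfies `Good`. -/
def Wins {Q : Type} (IsContr : Set (Q × Bool) → Prop) (Good : Set (Q × Bool) → Prop) :
    Strategy Q → Set (Q × Bool) → Prop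
  | .leaf, S => (∃ t, IsContr t ∧ t ⊆ S) ∨ Good S
  | .ask q s0 s1, S =>
      Wins IsContr Good s0 (insert (q, false) S) ∧ Wins IsContr Good s1 (insert (q, true) S)

/-- Size of a query. -/
def qsize : BQuery → ℕ
  | .base _ => 1
  | .not Q => qsize Q + 1
  | .or Q R => qsize Q + qsize R + 1
  | .and Q R => qsize Q + qsize R + 1

/-- The De Morgan translation, pushing negations down to eNDT formulas. -/
def dm : BQuery → BQuery
  | .base A => .base A
  | .or Q R => .or (dm Q) (dm R)
  | .and Q R => .and (dm Q) (dm R)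
  | .not (.base A) => .not (.base A)
  | .not (.not Q) => dm Q
  | .not (.or Q R) => .and (dm (.not Q)) (dm (.not R))
  | .not (.and Q R) => .or (dm (.not Q)) (dm (.not R))
termination_by Q => qsize Q
decreasing_by all_goals (simp [qsize] <;> omega)

/-- De Morgan queries: negation occurs only directly in front of eNDT formulas. -/
def IsDM : BQuery → Prop
  | .base _ => True
  | .not (.base _) => True
  | .not _ => False
  | .or Q R => IsDM Q ∧ IsDM R
  | .and Q R => IsDM Q ∧ IsDM R

/-- A strategy of the game `NB^DM`: all queries asked are De Morgan queries. -/
def AllDM : Strategy BQuery → Prop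
  | .leaf => True
  | .ask q s0 s1 => IsDM q ∧ AllDM s0 ∧ AllDM s1

/-- The number of maximal eNDT subformula occurrences in a query. -/
def nleaves : BQuery → ℕ
  | .base _ => 1
  | .not Q => nleaves Q
  | .or Q R => nleaves Q + nleaves R
  | .and Q R => nleaves Q + nleaves R

section Aux

deriving instance DecidableEq for ENDT
deriving instance DecidableEq for BQuery

/-- Exists a winning DM strategy of depth at most `d` from state `S`. -/
def Ex (E : ℕ → ENDT) (d : ℕ) (S : Set (BQuery × Bool)) : Prop :=
  ∃ σ : Strategy BQuery, AllDM σ ∧ σ.depth ≤ d ∧ Wins (NBContr E) (fun _ => False) σ S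

theorem wins_mono {E : ℕ → ENDT} {σ : Strategy BQuery} :
    ∀ {S T : Set (BQuery × Bool)}, S ⊆ T →
      Wins (NBContr E) (fun _ => False) σ S → Wins (NBContr E) (fun _ => False) σ T := by
  induction σ with
  | leaf =>
    intro S T hST h
    rcases h with ⟨t, ht, hsub⟩ | h
    · exact Or.inl ⟨t, ht, hsub.trans hST⟩
    · exact h.elim
  | ask q s0 s1 ih0 ih1 =>
    intro S T hST h
    exact ⟨ih0 (Set.insert_subset_insert hST) h.1, ih1 (Set.insert_subset_insert hST) h.2⟩

theorem ex_mono_d {E : ℕ → ENDT} {d d' : ℕ} {S : Set (BQuery × Bool)} (h : d ≤ d') :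
    Ex E d S → Ex E d' S := by
  rintro ⟨σ, h1, h2, h3⟩; exact ⟨σ, h1, h2.trans h, h3⟩

theorem ex_mono_S {E : ℕ → ENDT} {d : ℕ} {S T : Set (BQuery × Bool)} (h : S ⊆ T) :
    Ex E d S → Ex E d T := by
  rintro ⟨σ, h1, h2, h3⟩; exact ⟨σ, h1, h2, wins_mono h h3⟩

theorem ex_contr {E : ℕ → ENDT} {d : ℕ} {S : Set (BQuery × Bool)} {t : Set (BQuery × Bool)}
    (hc : NBContr E t) (hs : t ⊆ S) : Ex E d S :=
  ⟨.leaf, trivial, Nat.zero_le _, Or.inl ⟨t, hc, hs⟩⟩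

theorem ex_ask {E : ℕ → ENDT} {d : ℕ} {S : Set (BQuery × Bool)} (q : BQuery) (hq : IsDM q)
    (h0 : Ex E d (insert (q, false) S)) (h1 : Ex E d (insert (q, true) S)) :
    Ex E (d + 1) S := by
  obtain ⟨σ0, a0, d0, w0⟩ := h0
  obtain ⟨σ1, a1, d1, w1⟩ := h1
  exact ⟨.ask q σ0 σ1, ⟨hq, a0, a1⟩, by simp [Strategy.depth]; omega, w0, w1⟩

theorem isDM_dm : ∀ Q : BQuery, IsDM (dm Q) := by
  intro Q
  induction Q using dm.induct <;> simp_all [dm, IsDM]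

end Aux
theorem ex_clash {E : ℕ → ENDT} {S : Set (BQuery × Bool)} (q : BQuery) (hq : IsDM q)
    (h0 : (q, false) ∈ S) (h1 : (q, true) ∈ S) : Ex E 2 S := by
  match q, hq with
  | .base A, _ =>
    refine ex_contr (NBContr.simc A A (ENDT.Sim.refl A)) ?_
    intro p hp
    simp only [Set.mem_insert_iff, Set.mem_singleton_iff] at hp
    rcases hp with rfl | rfl
    · exact h0
    · exact h1
  | .not (.base A), _ =>
    refine ex_mono_d (by omega) (ex_ask (d := 1) (.base A) trivial ?_ ?_)
    · refine ex_contr (NBContr.notc (.base A) false) ?_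
      intro p hp
      simp only [Set.mem_insert_iff, Set.mem_singleton_iff] at hp
      rcases hp with rfl | rfl
      · exact Set.mem_insert_of_mem _ h0
      · exact Set.mem_insert _ _
    · refine ex_contr (NBContr.notc (.base A) true) ?_
      intro p hp
      simp only [Set.mem_insert_iff, Set.mem_singleton_iff] at hp
      rcases hp with rfl | rfl
      · exact Set.mem_insert_of_mem _ h1
      · exact Set.mem_insert _ _
  | .or q0 q1, hq =>
    refine ex_ask (d := 1) q0 hq.1 ?_ ?_
    · refine ex_ask (d := 0) q1 hq.2 ?_ ?_
      · refine ex_contr (NBContr.orc2 q0 q1) ?_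
        intro p hp
        simp only [Set.mem_insert_iff, Set.mem_singleton_iff] at hp
        rcases hp with rfl | rfl | rfl
        · exact Set.mem_insert_of_mem _ (Set.mem_insert_of_mem _ h1)
        · exact Set.mem_insert_of_mem _ (Set.mem_insert _ _)
        · exact Set.mem_insert _ _
      · refine ex_contr (NBContr.orc1 q0 q1) ?_
        intro p hp
        simp only [Set.mem_insert_iff, Set.mem_singleton_iff] at hp
        rcases hp with rfl | rfl
        · exact Set.mem_insert_of_mem _ (Set.mem_insert_of_mem _ h0)
        · exact Set.mem_insert _ _
    · refine ex_mono_d (by omega) (ex_contr (d := 1) (NBContr.orc0 q0 q1) ?_)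
      intro p hp
      simp only [Set.mem_insert_iff, Set.mem_singleton_iff] at hp
      rcases hp with rfl | rfl
      · exact Set.mem_insert_of_mem _ h0
      · exact Set.mem_insert _ _
  | .and q0 q1, hq =>
    refine ex_ask (d := 1) q0 hq.1 ?_ ?_
    · refine ex_mono_d (by omega) (ex_contr (d := 1) (NBContr.andc0 q0 q1) ?_)
      intro p hp
      simp only [Set.mem_insert_iff, Set.mem_singleton_iff] at hp
      rcases hp with rfl | rfl
      · exact Set.mem_insert_of_mem _ h1
      · exact Set.mem_insert _ _
    · refine ex_ask (d := 0) q1 hq.2 ?_ ?_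
      · refine ex_contr (NBContr.andc1 q0 q1) ?_
        intro p hp
        simp only [Set.mem_insert_iff, Set.mem_singleton_iff] at hp
        rcases hp with rfl | rfl
        · exact Set.mem_insert_of_mem _ (Set.mem_insert_of_mem _ h1)
        · exact Set.mem_insert _ _
      · refine ex_contr (NBContr.andc2 q0 q1) ?_
        intro p hp
        simp only [Set.mem_insert_iff, Set.mem_singleton_iff] at hp
        rcases hp with rfl | rfl | rfl
        · exact Set.mem_insert_of_mem _ (Set.mem_insert_of_mem _ h0)
        · exact Set.mem_insert_of_mem _ (Set.mem_insert _ _)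
        · exact Set.mem_insert _ _
/-- Weight of a query relative to a list `F` of "fixed" queries, which count as leaves. -/
def cw (F : List BQuery) : BQuery → ℕ
  | .base _ => 1
  | .not V => if BQuery.not V ∈ F then 1 else cw F V
  | .or V0 V1 => if BQuery.or V0 V1 ∈ F then 1 else cw F V0 + cw F V1
  | .and V0 V1 => if BQuery.and V0 V1 ∈ F then 1 else cw F V0 + cw F V1

theorem cw_pos (F : List BQuery) (U : BQuery) : 1 ≤ cw F U := by
  induction U with
  | base A => simp [cw]
  | not V ih => simp only [cw]; split <;> omega
  | or V0 V1 ih0 ih1 => simp only [cw]; split <;> omega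
  | and V0 V1 ih0 ih1 => simp only [cw]; split <;> omega

theorem cw_mem {F : List BQuery} {U : BQuery} (h : U ∈ F) : cw F U = 1 := by
  cases U <;> simp [cw, h]

theorem cw_self_cons (F : List BQuery) (U : BQuery) : cw (U :: F) U = 1 := by
  cases U <;> simp [cw]

theorem cw_cons_le (R : BQuery) (F : List BQuery) (U : BQuery) : cw (R :: F) U ≤ cw F U := by
  induction U with
  | base A => simp [cw]
  | not V ih =>
    by_cases h2 : BQuery.not V = R
    · rw [← h2, cw_self_cons]; exact cw_pos F _
    · by_cases h : BQuery.not V ∈ F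
      · rw [cw_mem h, cw_mem (List.mem_cons_of_mem _ h)]
      · have e1 : cw (R :: F) (.not V) = cw (R :: F) V := by
          simp [cw, List.mem_cons, h, h2]
        have e2 : cw F (.not V) = cw F V := by simp [cw, h]
        omega
  | or V0 V1 ih0 ih1 =>
    by_cases h2 : BQuery.or V0 V1 = R
    · rw [← h2, cw_self_cons]; exact cw_pos F _
    · by_cases h : BQuery.or V0 V1 ∈ F
      · rw [cw_mem h, cw_mem (List.mem_cons_of_mem _ h)]
      · have e1 : cw (R :: F) (.or V0 V1) = cw (R :: F) V0 + cw (R :: F) V1 := by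
          simp [cw, List.mem_cons, h, h2]
        have e2 : cw F (.or V0 V1) = cw F V0 + cw F V1 := by simp [cw, h]
        omega
  | and V0 V1 ih0 ih1 =>
    by_cases h2 : BQuery.and V0 V1 = R
    · rw [← h2, cw_self_cons]; exact cw_pos F _
    · by_cases h : BQuery.and V0 V1 ∈ F
      · rw [cw_mem h, cw_mem (List.mem_cons_of_mem _ h)]
      · have e1 : cw (R :: F) (.and V0 V1) = cw (R :: F) V0 + cw (R :: F) V1 := by
          simp [cw, List.mem_cons, h, h2]
        have e2 : cw F (.and V0 V1) = cw F V0 + cw F V1 := by simp [cw, h]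
        omega

/-- Spira centroid: find `R` of weight between `W/3` and `2W/3`, on a heavy chain. -/
theorem spira_chain (F : List BQuery) :
    ∀ (U : BQuery) (W : ℕ), 2 ≤ W → W < 3 * cw F U →
      ∃ R, W < 3 * cw F R ∧ 3 * cw F R ≤ 2 * W ∧ cw F R ≤ cw F U ∧
        cw (R :: F) U + cw F R ≤ cw F U + 1 := by
  intro U
  induction U with
  | base A =>
    intro W h2 h3
    refine ⟨.base A, ?_, ?_, le_refl _, ?_⟩ <;> simp only [cw] at * <;> omega
  | not V ih =>
    intro W h2 h3
    by_cases hle : 3 * cw F (.not V) ≤ 2 * W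
    · exact ⟨.not V, h3, hle, le_refl _, by rw [cw_self_cons]; omega⟩
    · push_neg at hle
      have hmem : BQuery.not V ∉ F := by
        intro h; rw [cw_mem h] at hle; omega
      have hV : cw F (.not V) = cw F V := by simp [cw, hmem]
      obtain ⟨R, hr1, hr2, hr3, hr4⟩ := ih W h2 (by omega)
      have hne : BQuery.not V ≠ R := by
        intro h; rw [← h] at hr2; omega
      have hs : cw (R :: F) (.not V) = cw (R :: F) V := by
        simp [cw, List.mem_cons, hmem, hne]
      exact ⟨R, hr1, hr2, by omega, by omega⟩
  | or V0 V1 ih0 ih1 =>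
    intro W h2 h3
    by_cases hle : 3 * cw F (.or V0 V1) ≤ 2 * W
    · exact ⟨.or V0 V1, h3, hle, le_refl _, by rw [cw_self_cons]; omega⟩
    · push_neg at hle
      have hmem : BQuery.or V0 V1 ∉ F := by
        intro h; rw [cw_mem h] at hle; omega
      have hV : cw F (.or V0 V1) = cw F V0 + cw F V1 := by simp [cw, hmem]
      have hp0 := cw_pos F V0
      have hp1 := cw_pos F V1
      rcases le_total (cw F V1) (cw F V0) with hc | hc
      · obtain ⟨R, hr1, hr2, hr3, hr4⟩ := ih0 W h2 (by omega)
        have hne : BQuery.or V0 V1 ≠ R := by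
          intro h; rw [← h] at hr2; omega
        have hs : cw (R :: F) (.or V0 V1) = cw (R :: F) V0 + cw (R :: F) V1 := by
          simp [cw, List.mem_cons, hmem, hne]
        have := cw_cons_le R F V1
        exact ⟨R, hr1, hr2, by omega, by omega⟩
      · obtain ⟨R, hr1, hr2, hr3, hr4⟩ := ih1 W h2 (by omega)
        have hne : BQuery.or V0 V1 ≠ R := by
          intro h; rw [← h] at hr2; omega
        have hs : cw (R :: F) (.or V0 V1) = cw (R :: F) V0 + cw (R :: F) V1 := by
          simp [cw, List.mem_cons, hmem, hne]
        have := cw_cons_le R F V0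
        exact ⟨R, hr1, hr2, by omega, by omega⟩
  | and V0 V1 ih0 ih1 =>
    intro W h2 h3
    by_cases hle : 3 * cw F (.and V0 V1) ≤ 2 * W
    · exact ⟨.and V0 V1, h3, hle, le_refl _, by rw [cw_self_cons]; omega⟩
    · push_neg at hle
      have hmem : BQuery.and V0 V1 ∉ F := by
        intro h; rw [cw_mem h] at hle; omega
      have hV : cw F (.and V0 V1) = cw F V0 + cw F V1 := by simp [cw, hmem]
      have hp0 := cw_pos F V0
      have hp1 := cw_pos F V1
      rcases le_total (cw F V1) (cw F V0) with hc | hc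
      · obtain ⟨R, hr1, hr2, hr3, hr4⟩ := ih0 W h2 (by omega)
        have hne : BQuery.and V0 V1 ≠ R := by
          intro h; rw [← h] at hr2; omega
        have hs : cw (R :: F) (.and V0 V1) = cw (R :: F) V0 + cw (R :: F) V1 := by
          simp [cw, List.mem_cons, hmem, hne]
        have := cw_cons_le R F V1
        exact ⟨R, hr1, hr2, by omega, by omega⟩
      · obtain ⟨R, hr1, hr2, hr3, hr4⟩ := ih1 W h2 (by omega)
        have hne : BQuery.and V0 V1 ≠ R := by
          intro h; rw [← h] at hr2; omega
        have hs : cw (R :: F) (.and V0 V1) = cw (R :: F) V0 + cw (R :: F) V1 := by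
          simp [cw, List.mem_cons, hmem, hne]
        have := cw_cons_le R F V0
        exact ⟨R, hr1, hr2, by omega, by omega⟩

theorem cw_nil (U : BQuery) : cw [] U = nleaves U := by
  induction U <;> simp [cw, nleaves, *]
/-- Depth bound for the main induction. -/
def hd : ℕ → ℕ
  | 0 => 2
  | 1 => 2
  | 2 => 6
  | 3 => 8
  | (n + 4) => 2 + hd (2 * (n + 4) / 3 + 1)
termination_by n => n
decreasing_by omega

theorem hd_eq (W : ℕ) (h : 4 ≤ W) : hd W = 2 + hd (2 * W / 3 + 1) := by
  obtain ⟨n, rfl⟩ : ∃ n, W = n + 4 := ⟨W - 4, by omega⟩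
  simp [hd]

theorem hd_ge2 : ∀ n, 2 ≤ hd n := by
  intro n
  match n with
  | 0 | 1 | 2 | 3 => simp [hd]
  | (n + 4) => simp [hd]

theorem hd_ge6 : ∀ n, 2 ≤ n → 6 ≤ hd n := by
  intro n
  induction n using Nat.strong_induction_on with
  | _ n ih =>
    match n with
    | 0 => intro h; omega
    | 1 => intro h; omega
    | 2 => intro _; simp [hd]
    | 3 => intro _; simp [hd]
    | (n + 4) =>
      intro _
      have h1 : 2 ≤ 2 * (n + 4) / 3 + 1 := by omega
      have h2 : 2 * (n + 4) / 3 + 1 < n + 4 := by omega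
      have := ih _ h2 h1
      simp only [hd]
      omega

theorem hd_lin : ∀ n, hd n ≤ 2 * n + 8 := by
  intro n
  induction n using Nat.strong_induction_on with
  | _ n ih =>
    match n with
    | 0 | 1 | 2 | 3 => simp [hd]
    | (n + 4) =>
      have h2 : 2 * (n + 4) / 3 + 1 < n + 4 := by omega
      have := ih _ h2
      simp only [hd]
      omega

theorem hd_le : ∀ n, 1 ≤ n → hd n ≤ 120 * (Nat.log 2 n + 1) := by
  intro n
  induction n using Nat.strong_induction_on with
  | _ n ih =>
    intro hn
    by_cases hsmall : n ≤ 56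
    · have := hd_lin n
      have : hd n ≤ 120 := by omega
      have : 120 ≤ 120 * (Nat.log 2 n + 1) := by nlinarith [Nat.zero_le (Nat.log 2 n)]
      omega
    · push_neg at hsmall
      set m := 2 * n / 3 + 1 with hm
      set m2 := 2 * m / 3 + 1 with hm2
      have e1 : hd n = 2 + hd m := hd_eq n (by omega)
      have e2 : hd m = 2 + hd m2 := hd_eq m (by omega)
      have hm2n : 2 * m2 ≤ n := by omega
      have hm2pos : 1 ≤ m2 := by omega
      have hm2lt : m2 < n := by omega
      have hlog : Nat.log 2 m2 + 1 ≤ Nat.log 2 n := by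
        calc Nat.log 2 m2 + 1 = Nat.log 2 (m2 * 2) :=
              (Nat.log_mul_base (by norm_num) (by omega)).symm
          _ ≤ Nat.log 2 n := Nat.log_mono_right (by omega)
      have := ih m2 hm2lt hm2pos
      omega
theorem ex_fclash {E : ℕ → ENDT} {S : Set (BQuery × Bool)} (U : BQuery) (b c : Bool)
    (h1 : (dm U, b) ∈ S) (h2 : (dm (.not U), b) ∈ S)
    (hc1 : (dm U, c) ∈ S) (hc2 : (dm (.not U), !c) ∈ S) : Ex E 2 S := by
  cases b <;> cases c
  · exact ex_clash (dm (.not U)) (isDM_dm _) h2 hc2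
  · exact ex_clash (dm U) (isDM_dm _) h1 hc1
  · exact ex_clash (dm U) (isDM_dm _) hc1 h1
  · exact ex_clash (dm (.not U)) (isDM_dm _) hc2 h2

theorem ex_loc {E : ℕ → ENDT} {S : Set (BQuery × Bool)} {d : ℕ}
    (X0 X1 Y0 Y1 : BQuery) (b : Bool)
    (hX0 : IsDM X0) (hX1 : IsDM X1) (hY0 : IsDM Y0) (hY1 : IsDM Y1)
    (hor : (.or X0 X1, b) ∈ S) (hand : (.and Y0 Y1, b) ∈ S)
    (next0 : ∀ (c : Bool) (S' : Set (BQuery × Bool)),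
        S ⊆ S' → (X0, c) ∈ S' → (Y0, c) ∈ S' → Ex E d S')
    (next1 : ∀ (c : Bool) (S' : Set (BQuery × Bool)),
        S ⊆ S' → (X1, c) ∈ S' → (Y1, c) ∈ S' → Ex E d S') :
    Ex E (d + 4) S := by
  have leafcase : ∀ x0 y0 x1 y1 : Bool,
      Ex E d (insert (Y1, y1) (insert (X1, x1) (insert (Y0, y0) (insert (X0, x0) S)))) := by
    intro x0 y0 x1 y1
    set S' := insert (Y1, y1) (insert (X1, x1) (insert (Y0, y0) (insert (X0, x0) S)))
      with hS'
    have hsub : S ⊆ S' := fun p hp =>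
      Set.mem_insert_of_mem _ (Set.mem_insert_of_mem _
        (Set.mem_insert_of_mem _ (Set.mem_insert_of_mem _ hp)))
    have hx0 : (X0, x0) ∈ S' :=
      Set.mem_insert_of_mem _ (Set.mem_insert_of_mem _
        (Set.mem_insert_of_mem _ (Set.mem_insert _ _)))
    have hy0 : (Y0, y0) ∈ S' :=
      Set.mem_insert_of_mem _ (Set.mem_insert_of_mem _ (Set.mem_insert _ _))
    have hx1 : (X1, x1) ∈ S' := Set.mem_insert_of_mem _ (Set.mem_insert _ _)
    have hy1 : (Y1, y1) ∈ S' := Set.mem_insert _ _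
    have hor' : (BQuery.or X0 X1, b) ∈ S' := hsub hor
    have hand' : (BQuery.and Y0 Y1, b) ∈ S' := hsub hand
    clear_value S'
    cases b with
    | true =>
      cases y0 with
      | false =>
        refine ex_contr (NBContr.andc0 Y0 Y1) ?_
        intro p hp
        simp only [Set.mem_insert_iff, Set.mem_singleton_iff] at hp
        rcases hp with rfl | rfl
        exacts [hand', hy0]
      | true =>
        cases y1 with
        | false =>
          refine ex_contr (NBContr.andc1 Y0 Y1) ?_
          intro p hp
          simp only [Set.mem_insert_iff, Set.mem_singleton_iff] at hp
          rcases hp with rfl | rfl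
          exacts [hand', hy1]
        | true =>
          cases x0 with
          | true => exact next0 true S' hsub hx0 hy0
          | false =>
            cases x1 with
            | true => exact next1 true S' hsub hx1 hy1
            | false =>
              refine ex_contr (NBContr.orc2 X0 X1) ?_
              intro p hp
              simp only [Set.mem_insert_iff, Set.mem_singleton_iff] at hp
              rcases hp with rfl | rfl | rfl
              exacts [hor', hx0, hx1]
    | false =>
      cases x0 with
      | true =>
        refine ex_contr (NBContr.orc0 X0 X1) ?_
        intro p hp
        simp only [Set.mem_insert_iff, Set.mem_singleton_iff] at hp
        rcases hp with rfl | rfl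
        exacts [hor', hx0]
      | false =>
        cases x1 with
        | true =>
          refine ex_contr (NBContr.orc1 X0 X1) ?_
          intro p hp
          simp only [Set.mem_insert_iff, Set.mem_singleton_iff] at hp
          rcases hp with rfl | rfl
          exacts [hor', hx1]
        | false =>
          cases y0 with
          | false => exact next0 false S' hsub hx0 hy0
          | true =>
            cases y1 with
            | false => exact next1 false S' hsub hx1 hy1
            | true =>
              refine ex_contr (NBContr.andc2 Y0 Y1) ?_
              intro p hp
              simp only [Set.mem_insert_iff, Set.mem_singleton_iff] at hp
              rcases hp with rfl | rfl | rfl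
              exacts [hand', hy0, hy1]
  refine ex_ask X0 hX0 ?_ ?_ <;> refine ex_ask Y0 hY0 ?_ ?_ <;>
    refine ex_ask X1 hX1 ?_ ?_ <;> refine ex_ask Y1 hY1 ?_ ?_ <;>
    exact leafcase _ _ _ _
theorem spira_step {E : ℕ → ENDT} {W : ℕ} {U : BQuery} {b : Bool} {F : List BQuery}
    {S : Set (BQuery × Bool)}
    (ihW : ∀ W' : ℕ, W' < W → ∀ (U' : BQuery) (b' : Bool) (F' : List BQuery)
        (S' : Set (BQuery × Bool)), cw F' U' ≤ W' →
        (dm U', b') ∈ S' → (dm (.not U'), b') ∈ S' →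
        (∀ R ∈ F', ∃ c : Bool, (dm R, c) ∈ S' ∧ (dm (.not R), !c) ∈ S') →
        Ex E (hd W') S')
    (hw : cw F U ≤ W) (h3 : 3 ≤ cw F U)
    (h1 : (dm U, b) ∈ S) (h2 : (dm (.not U), b) ∈ S)
    (hF : ∀ R ∈ F, ∃ c : Bool, (dm R, c) ∈ S ∧ (dm (.not R), !c) ∈ S) :
    Ex E (hd W) S := by
  obtain ⟨R, hr1, hr2, hr3, hr4⟩ := spira_chain F U (cw F U) (by omega) (by omega)
  obtain ⟨B', hB'lt, hdep, hRB, hUB⟩ :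
      ∃ B', B' < W ∧ hd B' + 2 ≤ hd W ∧ cw F R ≤ B' ∧ cw (R :: F) U ≤ B' := by
    by_cases hW : W ≤ 3
    · have hW3 : W = 3 := by omega
      refine ⟨2, by omega, ?_, by omega, by omega⟩
      rw [hW3]; simp [hd]
    · refine ⟨2 * W / 3 + 1, by omega, ?_, by omega, by omega⟩
      rw [hd_eq W (by omega)]; omega
  have key : ∀ r s : Bool, Ex E (hd B') (insert (dm (.not R), s) (insert (dm R, r) S)) := by
    intro r s
    set S' := insert (dm (.not R), s) (insert (dm R, r) S) with hS'
    have hsub : S ⊆ S' := fun p hp =>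
      Set.mem_insert_of_mem _ (Set.mem_insert_of_mem _ hp)
    have hmr : (dm R, r) ∈ S' := Set.mem_insert_of_mem _ (Set.mem_insert _ _)
    have hms : (dm (.not R), s) ∈ S' := Set.mem_insert _ _
    have hF' : ∀ R' ∈ F, ∃ c : Bool, (dm R', c) ∈ S' ∧ (dm (.not R'), !c) ∈ S' := by
      intro R' hR'
      obtain ⟨c, a1, a2⟩ := hF R' hR'
      exact ⟨c, hsub a1, hsub a2⟩
    clear_value S'
    by_cases hrs : r = s
    · subst hrs
      exact ihW B' hB'lt R r F S' hRB hmr hms hF'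
    · have hsb : s = !r := by cases r <;> cases s <;> simp_all
      subst hsb
      refine ihW B' hB'lt U b (R :: F) S' hUB (hsub h1) (hsub h2) ?_
      intro R' hR'
      rcases List.mem_cons.mp hR' with rfl | hR'
      · exact ⟨r, hmr, hms⟩
      · exact hF' R' hR'
  refine ex_mono_d hdep ?_
  refine ex_ask (dm R) (isDM_dm _) ?_ ?_ <;>
    refine ex_ask (dm (.not R)) (isDM_dm _) ?_ ?_ <;> exact key _ _

theorem main_lemma (E : ℕ → ENDT) :
    ∀ W : ℕ, ∀ U : BQuery, ∀ (b : Bool) (F : List BQuery) (S : Set (BQuery × Bool)),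
      cw F U ≤ W → (dm U, b) ∈ S → (dm (.not U), b) ∈ S →
      (∀ R ∈ F, ∃ c : Bool, (dm R, c) ∈ S ∧ (dm (.not R), !c) ∈ S) →
      Ex E (hd W) S := by
  intro W
  induction W using Nat.strong_induction_on with
  | _ W ihW =>
    intro U
    induction U with
    | base A =>
      intro b F S hw h1 h2 hF
      refine ex_contr (NBContr.notc (.base A) b) ?_
      intro p hp
      simp only [Set.mem_insert_iff, Set.mem_singleton_iff] at hp
      rcases hp with rfl | rfl
      · have e : dm (.not (.base A)) = .not (.base A) := by simp [dm]
        rwa [e] at h2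
      · have e : dm (.base A) = .base A := by simp [dm]
        rwa [e] at h1
    | not V ihV =>
      intro b F S hw h1 h2 hF
      have hdmn : dm (.not (.not V)) = dm V := by simp [dm]
      rw [hdmn] at h2
      by_cases hU : BQuery.not V ∈ F
      · obtain ⟨c, hc1, hc2⟩ := hF _ hU
        rw [hdmn] at hc2
        refine ex_mono_d (hd_ge2 W) (ex_fclash V b (!c) h2 h1 hc2 ?_)
        rw [Bool.not_not]; exact hc1
      · have hcw : cw F V ≤ W := by
          have e : cw F (.not V) = cw F V := by simp [cw, hU]
          omega
        exact ihV b F S hcw h2 h1 hF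
    | or U0 U1 ih0 ih1 =>
      intro b F S hw h1 h2 hF
      by_cases hU : BQuery.or U0 U1 ∈ F
      · obtain ⟨c, hc1, hc2⟩ := hF _ hU
        exact ex_mono_d (hd_ge2 W) (ex_fclash _ b c h1 h2 hc1 hc2)
      · have hsum : cw F (.or U0 U1) = cw F U0 + cw F U1 := by simp [cw, hU]
        have hp0 := cw_pos F U0
        have hp1 := cw_pos F U1
        by_cases hsm : cw F U0 + cw F U1 ≤ 2
        · have hW2 : 2 ≤ W := by omega
          have hdm1 : dm (.or U0 U1) = .or (dm U0) (dm U1) := by simp [dm]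
          have hdm2 : dm (.not (.or U0 U1)) = .and (dm (.not U0)) (dm (.not U1)) := by
            simp [dm]
          rw [hdm1] at h1
          rw [hdm2] at h2
          have hloc := ex_loc (dm U0) (dm U1) (dm (.not U0)) (dm (.not U1)) b
            (isDM_dm _) (isDM_dm _) (isDM_dm _) (isDM_dm _) h1 h2
            (fun c S' hsub hx hy => ihW 1 (by omega) U0 c F S' (by omega) hx hy
              (fun R hR => by
                obtain ⟨c', a1, a2⟩ := hF R hR
                exact ⟨c', hsub a1, hsub a2⟩))
            (fun c S' hsub hx hy => ihW 1 (by omega) U1 c F S' (by omega) hx hy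
              (fun R hR => by
                obtain ⟨c', a1, a2⟩ := hF R hR
                exact ⟨c', hsub a1, hsub a2⟩))
          refine ex_mono_d ?_ hloc
          have e1 : hd 1 = 2 := by simp [hd]
          have := hd_ge6 W hW2
          omega
        · exact spira_step ihW hw (by omega) h1 h2 hF
    | and U0 U1 ih0 ih1 =>
      intro b F S hw h1 h2 hF
      by_cases hU : BQuery.and U0 U1 ∈ F
      · obtain ⟨c, hc1, hc2⟩ := hF _ hU
        exact ex_mono_d (hd_ge2 W) (ex_fclash _ b c h1 h2 hc1 hc2)
      · have hsum : cw F (.and U0 U1) = cw F U0 + cw F U1 := by simp [cw, hU]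
        have hp0 := cw_pos F U0
        have hp1 := cw_pos F U1
        by_cases hsm : cw F U0 + cw F U1 ≤ 2
        · have hW2 : 2 ≤ W := by omega
          have hdm1 : dm (.and U0 U1) = .and (dm U0) (dm U1) := by simp [dm]
          have hdm2 : dm (.not (.and U0 U1)) = .or (dm (.not U0)) (dm (.not U1)) := by
            simp [dm]
          rw [hdm1] at h1
          rw [hdm2] at h2
          have hloc := ex_loc (dm (.not U0)) (dm (.not U1)) (dm U0) (dm U1) b
            (isDM_dm _) (isDM_dm _) (isDM_dm _) (isDM_dm _) h2 h1
            (fun c S' hsub hx hy => ihW 1 (by omega) U0 c F S' (by omega) hy hx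
              (fun R hR => by
                obtain ⟨c', a1, a2⟩ := hF R hR
                exact ⟨c', hsub a1, hsub a2⟩))
            (fun c S' hsub hx hy => ihW 1 (by omega) U1 c F S' (by omega) hy hx
              (fun R hR => by
                obtain ⟨c', a1, a2⟩ := hF R hR
                exact ⟨c', hsub a1, hsub a2⟩))
          refine ex_mono_d ?_ hloc
          have e1 : hd 1 = 2 := by simp [hd]
          have := hd_ge6 W hW2
          omega
        · exact spira_step ihW hw (by omega) h1 h2 hF
/-- Duality: for each NB-query `Q` there is a winning Prover strategy in `NB^DM` from
`{Q^DM ↦ b, (¬Q)^DM ↦ b}` using `O(log s)` rounds, where `s` is the number of maximal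
eNDT subformula occurrences of `Q`. -/
theorem duality_strategy :
    ∃ cst : ℕ, ∀ (E : ℕ → ENDT), (∀ i, (E i).extBound ≤ i) →
      ∀ (Q : BQuery) (b : Bool),
        ∃ σ : Strategy BQuery, AllDM σ ∧
          σ.depth ≤ cst * (Nat.log 2 (nleaves Q) + 1) ∧
          Wins (NBContr E) (fun _ => False) σ {(dm Q, b), (dm (.not Q), b)} := by
  refine ⟨120, ?_⟩
  intro E _ Q b
  have h1 : (dm Q, b) ∈ ({(dm Q, b), (dm (.not Q), b)} : Set (BQuery × Bool)) :=
    Set.mem_insert _ _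
  have h2 : (dm (.not Q), b) ∈ ({(dm Q, b), (dm (.not Q), b)} : Set (BQuery × Bool)) :=
    Set.mem_insert_of_mem _ rfl
  have hn : 1 ≤ nleaves Q := by
    have := cw_pos [] Q
    rwa [cw_nil] at this
  obtain ⟨σ, hA, hD, hW⟩ := main_lemma E (nleaves Q) Q b [] _
    (le_of_eq (cw_nil Q)) h1 h2 (by simp)
  exact ⟨σ, hA, hD.trans (hd_le _ hn), hW⟩
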